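/- Let (R, m) be a commutative Noetherian local ring and let A be a pure submodule of an R-module B such that B/A is radical-full and H(A) is an essential submodule of H(B). Then A is pure-essential in B. -/

import Mathlib

open IsLocalRing TensorProduct

universe u v w x

/-- A linear map `f : A → B` is pure if `X ⊗ f` is injective for every
finitely generated `R`-module `X`. -/
def IsPureMap {R : Type u} [CommRing R] {A : Type v} {B : Type w}
    [AddCommGroup A] [Module R A] [AddCommGroup B] [Module R B] (f : A →ₗ[R] B) : Prop :=
  ∀ (X : Type u) [AddCommGroup X] [Module R X], Module.Finite R X →
    Function.Injective (LinearMap.lTensor X f)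

/-- A submodule is pure if its inclusion is a pure map. -/
def IsPureSubmodule {R : Type u} [CommRing R] {B : Type v} [AddCommGroup B] [Module R B]
    (A : Submodule R B) : Prop :=
  IsPureMap A.subtype

/-- A pure submodule `A ⊆ B` is pure-essential if for every submodule `X` with `X ⊓ A = ⊥`
such that `(X + A)/X` is pure in `B/X`, one has `X = ⊥`. -/
def IsPureEssential {R : Type u} [CommRing R] {B : Type v} [AddCommGroup B] [Module R B]
    (A : Submodule R B) : Prop :=
  IsPureSubmodule A ∧
    ∀ X : Submodule R B, X ⊓ A = ⊥ → IsPureSubmodule (A.map X.mkQ) → X = ⊥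

/-- `H(M) = ⋂ₙ mⁿM`, where `m` is the maximal ideal. -/
def adicRad (R : Type u) [CommRing R] [IsLocalRing R]
    (M : Type v) [AddCommGroup M] [Module R M] : Submodule R M :=
  ⨅ n : ℕ, (maximalIdeal R) ^ n • ⊤

lemma one_tmul_eq_zero_of_mem {R : Type u} [CommRing R] {M : Type v} [AddCommGroup M]
    [Module R M] (I : Ideal R) {b : M} (hb : b ∈ I • (⊤ : Submodule R M)) :
    ((1 : R ⧸ I) ⊗ₜ[R] b : (R ⧸ I) ⊗[R] M) = 0 := by
  have : ((quotTensorEquivQuotSMul M I).symm (Submodule.Quotient.mk b)) = 1 ⊗ₜ[R] b :=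
    quotTensorEquivQuotSMul_symm_mk I b
  rw [← this, show (Submodule.Quotient.mk b : M ⧸ (I • (⊤ : Submodule R M))) = 0 from
    (Submodule.Quotient.mk_eq_zero _).2 hb, map_zero]

lemma mem_of_one_tmul_eq_zero {R : Type u} [CommRing R] {M : Type v} [AddCommGroup M]
    [Module R M] (I : Ideal R) {b : M}
    (hb : ((1 : R ⧸ I) ⊗ₜ[R] b : (R ⧸ I) ⊗[R] M) = 0) :
    b ∈ I • (⊤ : Submodule R M) := by
  have h := congrArg (quotTensorEquivQuotSMul M I) hb
  rw [map_zero] at h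
  have h2 : quotTensorEquivQuotSMul M I ((1 : R ⧸ I) ⊗ₜ[R] b) = Submodule.Quotient.mk b := by
    have := quotTensorEquivQuotSMul_mk_tmul (M := M) I 1 b
    simpa using this
  rw [h2] at h
  exact (Submodule.Quotient.mk_eq_zero _).1 h

lemma pure_smul_inf {R : Type u} [CommRing R] {B : Type v} [AddCommGroup B] [Module R B]
    (A : Submodule R B) (h : IsPureSubmodule A) (I : Ideal R) :
    A ⊓ (I • ⊤) ≤ I • A := by
  rintro b ⟨hbA, hbI⟩
  have hfin : Module.Finite R (R ⧸ I) := inferInstance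
  have hinj := h (R ⧸ I) hfin
  have h1 : (LinearMap.lTensor (R ⧸ I) A.subtype) ((1 : R ⧸ I) ⊗ₜ[R] (⟨b, hbA⟩ : A)) =
      (1 : R ⧸ I) ⊗ₜ[R] b := by simp [LinearMap.lTensor_tmul]
  have h0 : ((1 : R ⧸ I) ⊗ₜ[R] (⟨b, hbA⟩ : A) : (R ⧸ I) ⊗[R] A) = 0 := by
    apply hinj
    rw [h1, map_zero]
    exact one_tmul_eq_zero_of_mem I hbI
  have hmem : (⟨b, hbA⟩ : A) ∈ I • (⊤ : Submodule R A) := mem_of_one_tmul_eq_zero I h0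
  have : b ∈ (I • (⊤ : Submodule R A)).map A.subtype := ⟨_, hmem, rfl⟩
  rwa [Submodule.map_smul'', Submodule.map_top, Submodule.range_subtype] at this

theorem main
    (R : Type u) [CommRing R] [IsNoetherianRing R] [IsLocalRing R]
    {B : Type v} [AddCommGroup B] [Module R B] (A : Submodule R B)
    (hpure : IsPureSubmodule A)
    (hrad : maximalIdeal R • (⊤ : Submodule R (B ⧸ A)) = ⊤)
    (hess : ∀ W : Submodule R B, W ≤ ⨅ n : ℕ, ((maximalIdeal R) ^ n • ⊤ : Submodule R B) →
      W ⊓ (⨅ n : ℕ, (maximalIdeal R) ^ n • A) = ⊥ → W = ⊥) :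
    IsPureSubmodule A ∧
    ∀ X : Submodule R B, X ⊓ A = ⊥ → IsPureSubmodule (A.map X.mkQ) → X = ⊥ := by
  refine ⟨hpure, fun X hXA hXp => ?_⟩
  have h1 : maximalIdeal R • (⊤ : Submodule R B) ⊔ A = ⊤ := by
    rw [sup_comm, ← Submodule.map_mkQ_eq_top, Submodule.map_smul'',
      Submodule.map_top, Submodule.range_mkQ, hrad]
  have hsup : ∀ n : ℕ, (maximalIdeal R) ^ n • (⊤ : Submodule R B) ⊔ A = ⊤ := by
    intro n
    induction n with
    | zero => simp
    | succ n ih =>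
      have h2 : (maximalIdeal R) ^ n • (⊤ : Submodule R B) =
          (maximalIdeal R) ^ n • (maximalIdeal R • (⊤ : Submodule R B)) ⊔
            (maximalIdeal R) ^ n • A := by
        rw [← Submodule.smul_sup, h1]
      rw [eq_top_iff]
      conv_lhs => rw [← ih]
      refine sup_le ?_ le_sup_right
      calc (maximalIdeal R) ^ n • (⊤ : Submodule R B)
          = (maximalIdeal R) ^ n • (maximalIdeal R • (⊤ : Submodule R B)) ⊔
            (maximalIdeal R) ^ n • A := h2
        _ ≤ (maximalIdeal R) ^ (n + 1) • (⊤ : Submodule R B) ⊔ A :=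
            sup_le_sup (le_of_eq (by rw [← Submodule.smul_assoc, smul_eq_mul, ← pow_succ]))
              Submodule.smul_le_right
  apply hess X
  · refine le_iInf fun n => ?_
    intro x hx
    have hxmem : x ∈ (maximalIdeal R) ^ n • (⊤ : Submodule R B) ⊔ A := by
      rw [hsup n]; trivial
    obtain ⟨y, hy, a, ha, hxy⟩ := Submodule.mem_sup.1 hxmem
    have hmkx : X.mkQ x = 0 := (Submodule.Quotient.mk_eq_zero _).2 hx
    have hmky : X.mkQ y ∈ (maximalIdeal R) ^ n • (⊤ : Submodule R (B ⧸ X)) := by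
      have h3 : X.mkQ y ∈ ((maximalIdeal R) ^ n • (⊤ : Submodule R B)).map X.mkQ :=
        ⟨y, hy, rfl⟩
      rw [Submodule.map_smul''] at h3
      exact SetLike.le_def.1 (smul_mono_right _ le_top) h3
    have hya : X.mkQ a = -(X.mkQ y) := by
      have h4 := congrArg X.mkQ hxy
      rw [hmkx, map_add] at h4
      exact eq_neg_of_add_eq_zero_right h4
    have hmka : X.mkQ a ∈ (maximalIdeal R) ^ n • (⊤ : Submodule R (B ⧸ X)) := by
      rw [hya]; exact neg_mem hmky
    have hmkaA : X.mkQ a ∈ A.map X.mkQ := ⟨a, ha, rfl⟩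
    have h5 := pure_smul_inf (A.map X.mkQ) hXp ((maximalIdeal R) ^ n) ⟨hmkaA, hmka⟩
    rw [← Submodule.map_smul''] at h5
    obtain ⟨a', ha', haa⟩ := h5
    have hxa : a - a' ∈ X := by
      rw [← Submodule.Quotient.mk_eq_zero X]
      show X.mkQ (a - a') = 0
      rw [map_sub, haa, sub_self]
    have haA : a - a' ∈ A := sub_mem ha (Submodule.smul_le_right ha')
    have haeq : a = a' := by
      have h6 : a - a' ∈ X ⊓ A := ⟨hxa, haA⟩
      rw [hXA, Submodule.mem_bot, sub_eq_zero] at h6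
      exact h6
    rw [← hxy]
    exact add_mem hy (haeq ▸ SetLike.le_def.1 (smul_mono_right _ le_top) ha')
  · rw [eq_bot_iff]
    refine le_trans (inf_le_inf_left X ?_) (le_of_eq hXA)
    refine le_trans (iInf_le _ 0) ?_
    simp

theorem pureEssential_of_radicalFull_of_essential
    (R : Type u) [CommRing R] [IsNoetherianRing R] [IsLocalRing R]
    {B : Type v} [AddCommGroup B] [Module R B] (A : Submodule R B)
    (hpure : IsPureSubmodule A)
    (hrad : maximalIdeal R • (⊤ : Submodule R (B ⧸ A)) = ⊤)
    (hess : ∀ W : Submodule R B, W ≤ adicRad R B →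
      W ⊓ (⨅ n : ℕ, (maximalIdeal R) ^ n • A) = ⊥ → W = ⊥) :
    IsPureEssential A := by
  exact main R A hpure hrad hess
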